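/- For an ensemble of n states, the optimal discrimination probability under any measurement class containing trivial guessing equals 1/n if and only if all prior probabilities are 1/n and all states are identical: p_L(E) = 1/n ⟺ η_1 = ⋯ = η_n = 1/n and ρ_1 = ⋯ = ρ_n. -/

import Mathlib

open Matrix BigOperators ComplexOrder

noncomputable section

/-- Tensor product of a family of local operators, one per party/step. -/
def tensorFam {m : ℕ} {ι : Fin m → Type*} [∀ k, Fintype (ι k)]
    (A : (k : Fin m) → Matrix (ι k) (ι k) ℂ) :
    Matrix ((k : Fin m) → ι k) ((k : Fin m) → ι k) ℂ :=
  Matrix.of fun i j => ∏ k, A k (i k) (j k)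

/-- Separable operator: a sum of tensor products of positive semidefinite local operators. -/
def IsSep {m : ℕ} {ι : Fin m → Type*} [∀ k, Fintype (ι k)]
    (E : Matrix ((k : Fin m) → ι k) ((k : Fin m) → ι k) ℂ) : Prop :=
  ∃ (S : Finset ℕ) (A : ℕ → (k : Fin m) → Matrix (ι k) (ι k) ℂ),
    (∀ s ∈ S, ∀ k, (A s k).PosSemidef) ∧ E = ∑ s ∈ S, tensorFam (A s)

/-- Separable state: separable with trace one. -/
def IsSepState {m : ℕ} {ι : Fin m → Type*} [∀ k, Fintype (ι k)]
    (σ : Matrix ((k : Fin m) → ι k) ((k : Fin m) → ι k) ℂ) : Prop :=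
  IsSep σ ∧ σ.trace = 1

/-- Block positive: nonnegative mean value on every separable state. -/
def IsBlockPos {m : ℕ} {ι : Fin m → Type*} [∀ k, Fintype (ι k)]
    (E : Matrix ((k : Fin m) → ι k) ((k : Fin m) → ι k) ℂ) : Prop :=
  ∀ σ, IsSepState σ → 0 ≤ ((E * σ).trace).re

def IsPOVM {α N : Type*} [Fintype α] [Fintype N] [DecidableEq N]
    (M : α → Matrix N N ℂ) : Prop :=
  (∀ i, (M i).PosSemidef) ∧ ∑ i, M i = 1

/-- Average success probability of a guessing strategy. -/
def succProb {α N : Type*} [Fintype α] [Fintype N]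
    (η : α → ℝ) (ρ M : α → Matrix N N ℂ) : ℝ :=
  ∑ i, η i * ((ρ i * M i).trace).re

section AuxProof

variable {m : ℕ} {ι : Fin m → Type*} [∀ k, Fintype (ι k)] [∀ k, DecidableEq (ι k)]

/-- Quadratic form of `E` on the product vector built from local vectors `w`. -/
def Gq (E : Matrix ((k : Fin m) → ι k) ((k : Fin m) → ι k) ℂ)
    (w : (k : Fin m) → ι k → ℂ) : ℂ :=
  ∑ i, ∑ j, E i j * ∏ k, ((starRingEnd ℂ) (w k (i k)) * w k (j k))

/-- Rank-one local operator `|w k⟩⟨w k|`. -/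
def projFam (w : (k : Fin m) → ι k → ℂ) (k : Fin m) : Matrix (ι k) (ι k) ℂ :=
  Matrix.of fun x y => w k x * (starRingEnd ℂ) (w k y)

lemma projFam_posSemidef (w : (k : Fin m) → ι k → ℂ) (k : Fin m) :
    (projFam w k).PosSemidef := by
  rw [Matrix.posSemidef_iff_dotProduct_mulVec]
  constructor
  · ext x y
    simp only [Matrix.conjTranspose_apply, projFam, Matrix.of_apply, star_mul',
      Complex.conj_conj, RCLike.star_def]
    ring
  · intro x
    have h1 : dotProduct (star x) ((projFam w k) *ᵥ x)
        = star (∑ y, (starRingEnd ℂ) (w k y) * x y) * (∑ y, (starRingEnd ℂ) (w k y) * x y) := by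
      simp only [dotProduct, Matrix.mulVec, projFam, Matrix.of_apply, Pi.star_apply,
        RCLike.star_def, map_sum, _root_.map_mul, Complex.conj_conj]
      rw [Finset.sum_mul]
      refine Finset.sum_congr rfl fun a _ => ?_
      rw [Finset.mul_sum, Finset.mul_sum]
      exact Finset.sum_congr rfl fun b _ => by ring
    rw [h1]
    exact star_mul_self_nonneg _

lemma tensorFam_trace (A : (k : Fin m) → Matrix (ι k) (ι k) ℂ) :
    (tensorFam A).trace = ∏ k, (A k).trace := by
  simp only [Matrix.trace, Matrix.diag, tensorFam, Matrix.of_apply]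
  exact (Fintype.prod_sum fun k x => A k x x).symm

lemma trace_mul_proj (E : Matrix ((k : Fin m) → ι k) ((k : Fin m) → ι k) ℂ)
    (w : (k : Fin m) → ι k → ℂ) :
    (E * tensorFam (projFam w)).trace = Gq E w := by
  simp only [Matrix.trace, Matrix.diag, Matrix.mul_apply, tensorFam, projFam, Matrix.of_apply, Gq]
  refine Finset.sum_congr rfl fun i _ => Finset.sum_congr rfl fun j _ => ?_
  congr 1
  exact Finset.prod_congr rfl fun k _ => mul_comm _ _

lemma isSepState_proj (w : (k : Fin m) → ι k → ℂ)
    (hw : ∀ k, ∑ x, w k x * (starRingEnd ℂ) (w k x) = 1) :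
    IsSepState (tensorFam (projFam w)) := by
  refine ⟨⟨{0}, fun _ => projFam w, fun s _ k => projFam_posSemidef w k, by simp⟩, ?_⟩
  rw [tensorFam_trace, Finset.prod_eq_one]
  intro k _
  simpa [Matrix.trace, Matrix.diag, projFam] using hw k

lemma Gq_smul (E : Matrix ((k : Fin m) → ι k) ((k : Fin m) → ι k) ℂ)
    (c : Fin m → ℂ) (w : (k : Fin m) → ι k → ℂ) :
    Gq E (fun k x => c k * w k x) = (∏ k, (starRingEnd ℂ) (c k) * c k) * Gq E w := by
  simp only [Gq, Finset.mul_sum]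
  refine Finset.sum_congr rfl fun i _ => Finset.sum_congr rfl fun j _ => ?_
  rw [← mul_assoc, mul_comm (∏ k, (starRingEnd ℂ) (c k) * c k) (E i j), mul_assoc]
  congr 1
  rw [← Finset.prod_mul_distrib]
  refine Finset.prod_congr rfl fun k _ => ?_
  simp only [_root_.map_mul]
  ring

lemma Gq_conj (E : Matrix ((k : Fin m) → ι k) ((k : Fin m) → ι k) ℂ)
    (hE : E.IsHermitian) (w : (k : Fin m) → ι k → ℂ) :
    (starRingEnd ℂ) (Gq E w) = Gq E w := by
  calc (starRingEnd ℂ) (Gq E w)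
      = ∑ i, ∑ j, E j i * ∏ k, ((starRingEnd ℂ) (w k (j k)) * w k (i k)) := by
        rw [Gq, map_sum]
        refine Finset.sum_congr rfl fun i _ => ?_
        rw [map_sum]
        refine Finset.sum_congr rfl fun j _ => ?_
        rw [_root_.map_mul, map_prod]
        congr 1
        · exact hE.apply j i
        · refine Finset.prod_congr rfl fun k _ => ?_
          rw [_root_.map_mul, Complex.conj_conj]
          ring
    _ = Gq E w := Finset.sum_comm




lemma slot_sum {α : Type*} [DecidableEq α] (A B x y : α) :
    ∑ s : Fin 4, ((if A = B then 1 else (starRingEnd ℂ) (Complex.I ^ ((s : ℕ)))) *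
      ((starRingEnd ℂ) (if x = A then 1 else if x = B then Complex.I ^ ((s : ℕ)) else 0) *
        (if y = A then 1 else if y = B then Complex.I ^ ((s : ℕ)) else 0))) =
    4 * ((if x = A then 1 else 0) * (if y = B then 1 else 0)) := by
  have c0 : ((0 : Fin 4) : ℕ) = 0 := rfl
  have c1 : ((1 : Fin 4) : ℕ) = 1 := rfl
  have c2 : ((2 : Fin 4) : ℕ) = 2 := rfl
  have c3 : ((3 : Fin 4) : ℕ) = 3 := rfl
  have i2 : Complex.I ^ (2 : ℕ) = -1 := Complex.I_sq
  have i3 : Complex.I ^ (3 : ℕ) = -Complex.I := by rw [pow_succ, i2]; ring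
  have i4 : Complex.I ^ (4 : ℕ) = 1 := by rw [pow_succ, i3]; simp [Complex.I_mul_I]
  have i6 : Complex.I ^ (6 : ℕ) = -1 := by
    rw [show (6:ℕ) = 4 + 2 from rfl, pow_add, i4, i2]; ring
  have i7 : Complex.I ^ (7 : ℕ) = -Complex.I := by
    rw [show (7:ℕ) = 4 + 3 from rfl, pow_add, i4, i3]; ring
  by_cases hAB : A = B
  · subst hAB
    by_cases hx : x = A <;> by_cases hy : y = A <;>
      simp [hx, hy, Fin.sum_univ_four, c0, c1, c2, c3, i2, i3, i4, i6, i7, Complex.conj_I] <;>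
      try norm_num [i2, i3, i4, i6, i7]
  · have hBA : ¬ B = A := fun h => hAB h.symm
    by_cases hx : x = A
    · by_cases hy : y = A
      · simp [hx, hy, hAB, hBA, Fin.sum_univ_four, c0, c1, c2, c3, i2, i3, i4, i6, i7,
          Complex.conj_I]
        try ring_nf
        try norm_num [i2, i3, i4, i6, i7]
      · by_cases hy' : y = B
        · simp [hx, hy, hy', hAB, hBA, Fin.sum_univ_four, c0, c1, c2, c3, i2, i3, i4, i6, i7,
            Complex.conj_I]
          try ring_nf
          try norm_num [i2, i3, i4, i6, i7]
        · simp [hx, hy, hy', hAB, hBA, Fin.sum_univ_four, c0, c1, c2, c3, i2, i3, i4, i6, i7,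
            Complex.conj_I]
    · by_cases hx' : x = B
      · by_cases hy : y = A
        · simp [hx, hx', hy, hAB, hBA, Fin.sum_univ_four, c0, c1, c2, c3, i2, i3, i4, i6, i7,
            Complex.conj_I]
          try ring_nf
          try norm_num [i2, i3, i4, i6, i7]
        · by_cases hy' : y = B
          · simp [hx, hx', hy, hy', hAB, hBA, Fin.sum_univ_four, c0, c1, c2, c3, i2, i3, i4, i6,
              i7, Complex.conj_I]
            try ring_nf
            try norm_num [i2, i3, i4, i6, i7]
          · simp [hx, hx', hy, hy', hAB, hBA, Fin.sum_univ_four, c0, c1, c2, c3, i2, i3, i4, i6,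
              i7, Complex.conj_I]
      · simp [hx, hx', Fin.sum_univ_four]

lemma eq_zero_of_Gq_eq_zero {E : Matrix ((k : Fin m) → ι k) ((k : Fin m) → ι k) ℂ}
    (h : ∀ w, Gq E w = 0) : E = 0 := by
  ext a b
  have h2 : ∑ t : Fin m → Fin 4,
      ((∏ k, (if a k = b k then 1 else (starRingEnd ℂ) (Complex.I ^ ((t k : ℕ))))) *
        Gq E (fun k x => if x = a k then 1 else if x = b k then Complex.I ^ ((t k : ℕ)) else 0))
      = (4:ℂ)^m * E a b := by
    calc ∑ t : Fin m → Fin 4,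
        ((∏ k, (if a k = b k then 1 else (starRingEnd ℂ) (Complex.I ^ ((t k : ℕ))))) *
          Gq E (fun k x => if x = a k then 1 else if x = b k then Complex.I ^ ((t k : ℕ)) else 0))
        = ∑ t : Fin m → Fin 4, ∑ i, ∑ j, E i j * ∏ k,
            ((if a k = b k then 1 else (starRingEnd ℂ) (Complex.I ^ ((t k : ℕ)))) *
              ((starRingEnd ℂ) (if i k = a k then 1 else if i k = b k then Complex.I ^ ((t k : ℕ)) else 0) *
                (if j k = a k then 1 else if j k = b k then Complex.I ^ ((t k : ℕ)) else 0))) := by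
          refine Finset.sum_congr rfl fun t _ => ?_
          rw [Gq, Finset.mul_sum]
          refine Finset.sum_congr rfl fun i _ => ?_
          rw [Finset.mul_sum]
          refine Finset.sum_congr rfl fun j _ => ?_
          rw [Finset.prod_mul_distrib, Finset.prod_mul_distrib, Finset.prod_mul_distrib]
          ring
      _ = ∑ i, ∑ j, E i j * ∑ t : Fin m → Fin 4, ∏ k,
            ((if a k = b k then 1 else (starRingEnd ℂ) (Complex.I ^ ((t k : ℕ)))) *
              ((starRingEnd ℂ) (if i k = a k then 1 else if i k = b k then Complex.I ^ ((t k : ℕ)) else 0) *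
                (if j k = a k then 1 else if j k = b k then Complex.I ^ ((t k : ℕ)) else 0))) := by
          rw [Finset.sum_comm]
          refine Finset.sum_congr rfl fun i _ => ?_
          rw [Finset.sum_comm]
          refine Finset.sum_congr rfl fun j _ => ?_
          rw [Finset.mul_sum]
      _ = ∑ i, ∑ j, E i j * ∏ k, ∑ s : Fin 4,
            ((if a k = b k then 1 else (starRingEnd ℂ) (Complex.I ^ ((s : ℕ)))) *
              ((starRingEnd ℂ) (if i k = a k then 1 else if i k = b k then Complex.I ^ ((s : ℕ)) else 0) *
                (if j k = a k then 1 else if j k = b k then Complex.I ^ ((s : ℕ)) else 0))) := by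
          refine Finset.sum_congr rfl fun i _ => Finset.sum_congr rfl fun j _ => ?_
          rw [Fintype.prod_sum]
      _ = ∑ i, ∑ j, E i j * ∏ k,
            ((4:ℂ) * ((if i k = a k then 1 else 0) * (if j k = b k then 1 else 0))) := by
          refine Finset.sum_congr rfl fun i _ => Finset.sum_congr rfl fun j _ => ?_
          congr 1
          exact Finset.prod_congr rfl fun k _ => slot_sum (a k) (b k) (i k) (j k)
      _ = ∑ i, ∑ j, E i j *
            ((4:ℂ)^m * ((if i = a then 1 else 0) * (if j = b then 1 else 0))) := by
          refine Finset.sum_congr rfl fun i _ => Finset.sum_congr rfl fun j _ => ?_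
          congr 1
          rw [Finset.prod_mul_distrib, Finset.prod_mul_distrib, Finset.prod_const,
            Finset.card_univ, Fintype.card_fin, Finset.prod_boole, Finset.prod_boole]
          congr 2
          · simp [funext_iff]
          · simp [funext_iff]
      _ = (4:ℂ)^m * E a b := by
          have hterm : ∀ i j : ((k : Fin m) → ι k), E i j *
              ((4:ℂ)^m * ((if i = a then 1 else 0) * (if j = b then 1 else 0)))
              = if i = a then (if j = b then (4:ℂ)^m * E i j else 0) else 0 := by
            intro i j
            by_cases h1 : i = a <;> by_cases h2 : j = b <;> simp [h1, h2] <;> ring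
          simp only [hterm]
          rw [Finset.sum_eq_single a]
          · rw [Finset.sum_eq_single b]
            · simp
            · intro c _ hc; simp [hc]
            · simp
          · intro c _ hc; simp [hc]
          · simp
  rw [Finset.sum_congr rfl (fun t _ => by rw [h (fun k x => if x = a k then 1 else if x = b k then Complex.I ^ ((t k : ℕ)) else 0), mul_zero])] at h2
  rw [Finset.sum_const, smul_zero] at h2
  have h4 : ((4:ℂ)^m) ≠ 0 := pow_ne_zero _ (by norm_num)
  have := h2.symm
  rw [Matrix.zero_apply]
  exact (mul_eq_zero.mp this).resolve_left h4

end AuxProof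

/-- for a class of separable POVMs containing the trivial guessing
measurements and the two-outcome coarse-grainings {σ, 1−σ} with σ separable,
the optimal guessing probability equals 1/n iff all priors are 1/n and all states
are identical. -/
theorem optimal_eq_inv_n_iff {m : ℕ} {ι : Fin m → Type*}
    [∀ k, Fintype (ι k)] [∀ k, DecidableEq (ι k)] {n : ℕ} (hn : 0 < n)
    (η : Fin n → ℝ) (ρ : Fin n → Matrix ((k : Fin m) → ι k) ((k : Fin m) → ι k) ℂ)
    (hη : ∀ i, 0 < η i) (hsum : ∑ i, η i = 1)
    (hρ : ∀ i, (ρ i).PosSemidef ∧ (ρ i).trace = 1)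
    (C : Set (Fin n → Matrix ((k : Fin m) → ι k) ((k : Fin m) → ι k) ℂ))
    (hC : ∀ M ∈ C, IsPOVM M ∧ ∀ i, IsSep (M i))
    (htriv : ∀ x : Fin n, (fun i => if i = x then (1 : Matrix ((k : Fin m) → ι k) ((k : Fin m) → ι k) ℂ) else 0) ∈ C)
    (htwo : ∀ x i : Fin n, x ≠ i →
      ∀ σ : Matrix ((k : Fin m) → ι k) ((k : Fin m) → ι k) ℂ, IsSepState σ →
        (fun j => if j = i then σ else if j = x then 1 - σ else 0) ∈ C)
    (pL : ℝ) (hpL : IsLUB ((fun M => succProb η ρ M) '' C) pL) :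
    pL = 1 / n ↔ ((∀ i, η i = 1 / n) ∧ (∀ i j, ρ i = ρ j)) := by
  have hn' : (0:ℝ) < (n:ℝ) := by exact_mod_cast hn
  have htrivval : ∀ x : Fin n, succProb η ρ
      (fun i => if i = x then (1 : Matrix ((k : Fin m) → ι k) ((k : Fin m) → ι k) ℂ) else 0)
      = η x := by
    intro x
    rw [succProb, Finset.sum_eq_single x]
    · simp [(hρ x).2]
    · intro i _ hix; simp [hix]
    · simp
  constructor
  · intro hpl
    have hle : ∀ x, η x ≤ 1 / n := by
      intro x
      have hmem : η x ∈ (fun M => succProb η ρ M) '' C := ⟨_, htriv x, htrivval x⟩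
      have := hpL.1 hmem
      rwa [hpl] at this
    have hηeq : ∀ x, η x = 1 / n := by
      have hsum' : ∑ _i : Fin n, (1 / n : ℝ) = 1 := by
        rw [Finset.sum_const, Finset.card_univ, Fintype.card_fin, nsmul_eq_mul]
        field_simp
      have := (Finset.sum_eq_sum_iff_of_le (fun i _ => hle i)).mp (by rw [hsum, hsum'])
      exact fun x => this x (Finset.mem_univ x)
    refine ⟨hηeq, ?_⟩
    have hcomp : ∀ x y : Fin n, x ≠ y → ∀ σ, IsSepState σ →
        ((ρ y * σ).trace).re ≤ ((ρ x * σ).trace).re := by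
      intro x y hxy σ hσ
      have hM := htwo x y hxy σ hσ
      have hval : succProb η ρ (fun j => if j = y then σ else if j = x then 1 - σ else 0)
          = (1/n) * ((ρ y * σ).trace).re + (1/n) * (1 - ((ρ x * σ).trace).re) := by
        rw [succProb, ← Finset.sum_subset (Finset.subset_univ ({y, x} : Finset (Fin n)))]
        · rw [Finset.sum_pair (fun h => hxy h.symm)]
          have hyx : ¬ x = y := hxy
          have htr : ((ρ x * (1 - σ)).trace).re = 1 - ((ρ x * σ).trace).re := by
            rw [mul_sub, mul_one, Matrix.trace_sub, (hρ x).2]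
            simp [Complex.sub_re]
          simp only []
          simp [hyx, hηeq x, hηeq y, htr]
        · intro c _ hc
          simp only [Finset.mem_insert, Finset.mem_singleton] at hc
          push_neg at hc
          simp [hc.1, hc.2]
      have hub : succProb η ρ (fun j => if j = y then σ else if j = x then 1 - σ else 0) ≤ pL :=
        hpL.1 ⟨_, hM, rfl⟩
      rw [hpl, hval] at hub
      have h1n : (0:ℝ) < 1/n := by positivity
      nlinarith [hub]
    intro i j
    by_cases hij : i = j
    · rw [hij]
    have hkey : ∀ σ, IsSepState σ → (((ρ i - ρ j) * σ).trace).re = 0 := by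
      intro σ hσ
      have h1 := hcomp i j hij σ hσ
      have h2 := hcomp j i (fun h => hij h.symm) σ hσ
      rw [Matrix.sub_mul, Matrix.trace_sub]
      simp only [Complex.sub_re]
      linarith
    set E := ρ i - ρ j with hEdef
    have hEH : E.IsHermitian := ((hρ i).1.1).sub ((hρ j).1.1)
    have hGunit : ∀ w : (k : Fin m) → ι k → ℂ,
        (∀ k, ∑ x, w k x * (starRingEnd ℂ) (w k x) = 1) → Gq E w = 0 := by
      intro w hw
      have h1 := hkey _ (isSepState_proj w hw)
      rw [trace_mul_proj] at h1
      have h2 := Gq_conj E hEH w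
      have him : (Gq E w).im = 0 := Complex.conj_eq_iff_im.mp h2
      exact Complex.ext (by simpa using h1) (by simpa using him)
    have hGall : ∀ w : (k : Fin m) → ι k → ℂ, Gq E w = 0 := by
      intro w
      by_cases hz : ∃ k, ∀ x, w k x = 0
      · obtain ⟨k0, hk0⟩ := hz
        rw [Gq]
        refine Finset.sum_eq_zero fun i' _ => Finset.sum_eq_zero fun j' _ => ?_
        rw [Finset.prod_eq_zero (Finset.mem_univ k0) (by simp [hk0]), mul_zero]
      · push_neg at hz
        set c : Fin m → ℝ := fun k => ∑ x, Complex.normSq (w k x) with hcdef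
        have hcpos : ∀ k, 0 < c k := by
          intro k
          obtain ⟨x0, hx0⟩ := hz k
          have h1 : 0 < Complex.normSq (w k x0) := Complex.normSq_pos.mpr hx0
          exact lt_of_lt_of_le h1 (Finset.single_le_sum
            (fun x _ => Complex.normSq_nonneg (w k x)) (Finset.mem_univ x0))
        set d : Fin m → ℂ := fun k => (((Real.sqrt (c k))⁻¹ : ℝ) : ℂ) with hddef
        have hdd : ∀ k, d k * d k = (((c k)⁻¹ : ℝ) : ℂ) := by
          intro k
          rw [hddef]
          rw [← Complex.ofReal_mul, ← mul_inv, Real.mul_self_sqrt (hcpos k).le]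
        have hw' : ∀ k, ∑ x, (d k * w k x) * (starRingEnd ℂ) (d k * w k x) = 1 := by
          intro k
          have hterm : ∀ x, (d k * w k x) * (starRingEnd ℂ) (d k * w k x)
              = (((c k)⁻¹ : ℝ) : ℂ) * ((Complex.normSq (w k x) : ℝ) : ℂ) := by
            intro x
            rw [_root_.map_mul]
            have hdc : (starRingEnd ℂ) (d k) = d k := by rw [hddef]; exact Complex.conj_ofReal _
            rw [hdc]
            have hmc : w k x * (starRingEnd ℂ) (w k x) = ((Complex.normSq (w k x) : ℝ) : ℂ) :=
              Complex.mul_conj (w k x)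
            calc (d k * w k x) * (d k * (starRingEnd ℂ) (w k x))
                = (d k * d k) * (w k x * (starRingEnd ℂ) (w k x)) := by ring
              _ = (((c k)⁻¹ : ℝ) : ℂ) * ((Complex.normSq (w k x) : ℝ) : ℂ) := by
                  rw [hdd k, hmc]
          rw [Finset.sum_congr rfl fun x _ => hterm x, ← Finset.mul_sum]
          rw [← Complex.ofReal_sum]
          rw [show (∑ i : ι k, Complex.normSq (w k i)) = c k from rfl]
          rw [← Complex.ofReal_mul, inv_mul_cancel₀ (ne_of_gt (hcpos k))]
          exact Complex.ofReal_one
        have h0 := hGunit (fun k x => d k * w k x) hw'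
        rw [Gq_smul] at h0
        have hne : (∏ k, (starRingEnd ℂ) (d k) * d k) ≠ 0 := by
          rw [Finset.prod_ne_zero_iff]
          intro k _
          have hdc : (starRingEnd ℂ) (d k) = d k := by rw [hddef]; exact Complex.conj_ofReal _
          rw [hdc, hdd k]
          simp only [ne_eq, Complex.ofReal_eq_zero]
          exact inv_ne_zero (ne_of_gt (hcpos k))
        exact (mul_eq_zero.mp h0).resolve_left hne
    have hE0 : E = 0 := eq_zero_of_Gq_eq_zero hGall
    exact sub_eq_zero.mp hE0
  · rintro ⟨hη1, hρeq⟩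
    set i0 : Fin n := ⟨0, hn⟩ with hi0
    have hval : ∀ M ∈ C, succProb η ρ M = 1 / n := by
      intro M hM
      obtain ⟨⟨hpos, hone⟩, _⟩ := hC M hM
      calc succProb η ρ M = ∑ i, (1/n : ℝ) * ((ρ i0 * M i).trace).re := by
            refine Finset.sum_congr rfl fun i _ => ?_
            rw [hη1 i, hρeq i i0]
        _ = (1/n : ℝ) * ∑ i, ((ρ i0 * M i).trace).re := by rw [Finset.mul_sum]
        _ = (1/n : ℝ) * ((∑ i, (ρ i0 * M i)).trace).re := by rw [Matrix.trace_sum, Complex.re_sum]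
        _ = 1/n := by
            rw [← Finset.mul_sum, hone, mul_one, (hρ i0).2]
            simp
    have himg : (fun M => succProb η ρ M) '' C = {(1 / (n:ℝ) : ℝ)} := by
      apply Set.Subset.antisymm
      · rintro _ ⟨M, hM, rfl⟩
        exact Set.mem_singleton_iff.mpr (hval M hM)
      · intro z hz
        rw [Set.mem_singleton_iff] at hz
        refine ⟨_, htriv i0, ?_⟩
        show succProb η ρ (fun i => if i = i0 then 1 else 0) = z
        rw [htrivval, hη1 i0]
        exact hz.symm
    rw [himg] at hpL
    exact hpL.unique isLUB_singleton
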